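/- Let G be a countable group, H ≤ G a subgroup such that the pair (G,H) is inner amenable, and let m be an H-conjugation-invariant mean on G. Let F be a finite collection of nonamenable subgroups of H. Then m({g ∈ G : L ∩ C_G(g) is nonamenable for all L ∈ F}) = 1. -/

import Mathlib

open Pointwise

/-- A mean on `X`: a finitely additive probability measure defined on all subsets of `X`. -/
structure Mean (X : Type*) where
  m : Set X → ℝ
  nonneg : ∀ A : Set X, 0 ≤ m A
  total : m Set.univ = 1
  fin_add : ∀ A B : Set X, Disjoint A B → m (A ∪ B) = m A + m B

/-- A mean on a `G`-set `X` is invariant if it is preserved by the action of every `g ∈ G`. -/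
def MeanInvariant (G : Type*) [Group G] {X : Type*} [MulAction G X] (m : Mean X) : Prop :=
  ∀ (g : G) (A : Set X), m.m ((fun x => g • x) '' A) = m.m A

/-- The action of `G` on `X` is amenable: there is a `G`-invariant mean on `X`. -/
def AmenableAction (G : Type*) [Group G] (X : Type*) [MulAction G X] : Prop :=
  ∃ m : Mean X, MeanInvariant G m

/-- A group is amenable if its left translation action on itself admits an invariant mean. -/
def AmenableGroup (G : Type*) [Group G] : Prop :=
  ∃ m : Mean G, ∀ (g : G) (A : Set G), m.m ((fun x => g * x) '' A) = m.m A

/-- `H` is `L`-q-normal in `M` if `{g ∈ M : gHg⁻¹ ∩ H ∈ L}` generates `M`. -/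
def IsLQNormal {G : Type*} [Group G] (L : Subgroup G → Prop) (H M : Subgroup G) : Prop :=
  H ≤ M ∧
    Subgroup.closure
      {g : G | g ∈ M ∧ L (Subgroup.map (MulAut.conj g).toMonoidHom H ⊓ H)} = M

/-- `H` is `L`-wq-normal in `M`: there is an increasing ordinal-indexed chain from `H` to `M`
whose unions of initial segments are `L`-q-normal at every stage. -/
def IsLWQNormal {G : Type*} [Group G] (L : Subgroup G → Prop) (H M : Subgroup G) : Prop :=
  ∃ (lam : Ordinal.{0}) (c : Ordinal.{0} → Subgroup G),
    (∀ α β : Ordinal.{0}, α ≤ β → β ≤ lam → c α ≤ c β) ∧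
    c 0 = H ∧ c lam = M ∧
    ∀ α : Ordinal.{0}, 0 < α → α ≤ lam →
      IsLQNormal L (⨆ (β : Ordinal.{0}) (_ : β < α), c β) (c α)

/-- q*-normality: `{g ∈ M : gHg⁻¹ ∩ H nonamenable}` generates `M`. -/
def IsQStarNormal {G : Type*} [Group G] (H M : Subgroup G) : Prop :=
  IsLQNormal (fun K => ¬ AmenableGroup ↥K) H M

/-- wq*-normality. -/
def IsWQStarNormal {G : Type*} [Group G] (H M : Subgroup G) : Prop :=
  IsLWQNormal (fun K => ¬ AmenableGroup ↥K) H M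

/-- q-normality: `{g ∈ M : gHg⁻¹ ∩ H infinite}` generates `M`. -/
def IsQNormal {G : Type*} [Group G] (H M : Subgroup G) : Prop :=
  IsLQNormal (fun K => ((K : Set G)).Infinite) H M

/-- wq-normality. -/
def IsWQNormal {G : Type*} [Group G] (H M : Subgroup G) : Prop :=
  IsLWQNormal (fun K => ((K : Set G)).Infinite) H M

/-- `n`-degree `L`-wq-normality in `G`: `L₀ = L`, `L_{n+1} = {H : H is Lₙ-wq-normal in G}`. -/
def NDegLWQNormal {G : Type*} [Group G] (L : Subgroup G → Prop) : ℕ → Subgroup G → Prop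
  | 0, H => L H
  | n + 1, H => IsLWQNormal (NDegLWQNormal L n) H ⊤

/-- The isoperimetric constant `φ_S(X)` of a `G`-set `X` with respect to a finite `S ⊆ G`. -/
noncomputable def phiConst {G : Type*} [Group G] (S : Finset G) (X : Type*) [MulAction G X] :
    ℝ :=
  sInf {r : ℝ | ∃ P : Finset X, P.Nonempty ∧
    r = (∑ s ∈ S, (((s • (P : Set X)) \ (P : Set X)).ncard : ℝ)) / (P.card : ℝ)}


/-- The pair `(G,H)` is inner amenable: there is an atomless mean on `G` invariant under
conjugation by elements of `H`. -/
def PairInnerAmenable {G : Type*} [Group G] (H : Subgroup G) : Prop :=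
  ∃ m : Mean G, (∀ g : G, m.m {g} = 0) ∧
    ∀ h ∈ H, ∀ A : Set G, m.m ((fun x => h * x * h⁻¹) '' A) = m.m A

namespace MeanAux
open scoped Classical

variable {X : Type*}

theorem mean_empty (m : Mean X) : m.m ∅ = 0 := by
  have h := m.fin_add ∅ ∅ (disjoint_bot_left)
  simp at h
  linarith

theorem mean_mono (m : Mean X) {A B : Set X} (h : A ⊆ B) : m.m A ≤ m.m B := by
  have h2 := m.fin_add A (B \ A) Set.disjoint_sdiff_right
  rw [Set.union_diff_cancel h] at h2
  have := m.nonneg (B \ A)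
  linarith

theorem mean_le_one (m : Mean X) (A : Set X) : m.m A ≤ 1 := by
  have := mean_mono m (Set.subset_univ A)
  rw [m.total] at this
  exact this

theorem mean_subadd (m : Mean X) (A B : Set X) : m.m (A ∪ B) ≤ m.m A + m.m B := by
  have h2 := m.fin_add A (B \ A) Set.disjoint_sdiff_right
  rw [Set.union_diff_self] at h2
  have := mean_mono m (Set.diff_subset : B \ A ⊆ B)
  linarith

theorem mean_compl (m : Mean X) (A : Set X) : m.m Aᶜ = 1 - m.m A := by
  have h := m.fin_add A Aᶜ disjoint_compl_right
  rw [Set.union_compl_self, m.total] at h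
  linarith

/-- The point mass at `x`, used as a junk value. -/
noncomputable def deltaMean (x : X) : Mean X where
  m := fun A => if x ∈ A then 1 else 0
  nonneg := fun A => by by_cases h : x ∈ A <;> simp [h]
  total := by simp
  fin_add := fun A B hAB => by
    by_cases hA : x ∈ A <;> by_cases hB : x ∈ B
    · exact absurd rfl (hAB.ne_of_mem hA hB)
    · simp [hA, hB]
    · simp [hA, hB]
    · simp [hA, hB]

/-! ### The elementary integral of bounded `ℕ`-valued functions against a mean -/

/-- `Jint m N φ = ∑_{i<N} m {x | i+1 ≤ φ x}`, the layer-cake integral of `φ`. -/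
noncomputable def Jint (m : Mean X) (N : ℕ) (φ : X → ℕ) : ℝ :=
  ∑ i ∈ Finset.range N, m.m {x | i + 1 ≤ φ x}

theorem Jint_nonneg (m : Mean X) (N : ℕ) (φ : X → ℕ) : 0 ≤ Jint m N φ :=
  Finset.sum_nonneg fun i _ => m.nonneg _

theorem Jint_le (m : Mean X) (N : ℕ) (φ : X → ℕ) : Jint m N φ ≤ N := by
  calc Jint m N φ ≤ ∑ _i ∈ Finset.range N, (1:ℝ) :=
        Finset.sum_le_sum fun i _ => mean_le_one m _
    _ = N := by simp

theorem Jint_stable (m : Mean X) {N M : ℕ} {φ : X → ℕ} (h : ∀ x, φ x ≤ N) (hNM : N ≤ M) :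
    Jint m M φ = Jint m N φ := by
  unfold Jint
  rw [← Finset.sum_subset (Finset.range_subset_range.2 hNM)]
  intro i _ hi
  have hi' : N ≤ i := by
    by_contra hc
    exact hi (Finset.mem_range.2 (lt_of_not_ge hc))
  have : {x | i + 1 ≤ φ x} = (∅ : Set X) := by
    ext x; simp only [Set.mem_setOf_eq, Set.mem_empty_iff_false, iff_false]
    intro hx; exact absurd (le_trans hx (h x)) (by omega)
  rw [this, mean_empty]

theorem Jint_mono (m : Mean X) (N : ℕ) {φ ψ : X → ℕ} (h : ∀ x, φ x ≤ ψ x) :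
    Jint m N φ ≤ Jint m N ψ :=
  Finset.sum_le_sum fun i _ => mean_mono m fun x hx => le_trans hx (h x)

theorem fiber_sum (m : Mean X) (A : Set X) (φ : X → ℕ) (N : ℕ) :
    ∑ i ∈ Finset.range (N + 1), m.m {x | x ∈ A ∧ φ x = i} = m.m {x | x ∈ A ∧ φ x ≤ N} := by
  induction N with
  | zero => simp
  | succ n ih =>
    rw [Finset.sum_range_succ, ih]
    have hd : Disjoint {x | x ∈ A ∧ φ x ≤ n} {x | x ∈ A ∧ φ x = n + 1} := by
      rw [Set.disjoint_iff_inter_eq_empty]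
      ext x; simp only [Set.mem_inter_iff, Set.mem_setOf_eq, Set.mem_empty_iff_false, iff_false]
      rintro ⟨⟨-, h1⟩, -, h2⟩; omega
    have hu : {x | x ∈ A ∧ φ x ≤ n} ∪ {x | x ∈ A ∧ φ x = n + 1} = {x | x ∈ A ∧ φ x ≤ n + 1} := by
      ext x; simp only [Set.mem_union, Set.mem_setOf_eq]; constructor
      · rintro (⟨h1, h2⟩ | ⟨h1, h2⟩) <;> exact ⟨h1, by omega⟩
      · rintro ⟨h1, h2⟩
        rcases Nat.lt_or_ge (φ x) (n + 1) with h3 | h3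
        · exact Or.inl ⟨h1, by omega⟩
        · exact Or.inr ⟨h1, by omega⟩
    rw [← hu, m.fin_add _ _ hd]

/-- `ℕ`-valued indicator. -/
noncomputable def ind (A : Set X) (x : X) : ℕ := if x ∈ A then 1 else 0

theorem ind_of_mem {A : Set X} {x : X} (h : x ∈ A) : ind A x = 1 := if_pos h
theorem ind_of_not_mem {A : Set X} {x : X} (h : x ∉ A) : ind A x = 0 := if_neg h
theorem ind_le_one (A : Set X) (x : X) : ind A x ≤ 1 := by
  unfold ind; split <;> omega

theorem Jint_add_indicator_core (m : Mean X) (A : Set X) {N : ℕ} {φ : X → ℕ}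
    (h : ∀ x, φ x ≤ N) :
    Jint m (N + 1) (fun x => φ x + ind A x) = Jint m (N + 1) φ + m.m A := by
  have key : ∀ i : ℕ, m.m {x | i + 1 ≤ φ x + ind A x}
      = m.m {x | i + 1 ≤ φ x} + m.m {x | x ∈ A ∧ φ x = i} := by
    intro i
    have hd : Disjoint {x | i + 1 ≤ φ x} {x | x ∈ A ∧ φ x = i} := by
      rw [Set.disjoint_iff_inter_eq_empty]
      ext x; simp only [Set.mem_inter_iff, Set.mem_setOf_eq, Set.mem_empty_iff_false, iff_false]
      rintro ⟨h1, -, h2⟩; omega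
    have hu : {x | i + 1 ≤ φ x + ind A x}
        = {x | i + 1 ≤ φ x} ∪ {x | x ∈ A ∧ φ x = i} := by
      ext x; simp only [Set.mem_union, Set.mem_setOf_eq]
      by_cases hx : x ∈ A <;> simp [ind_of_mem, ind_of_not_mem, hx] <;> omega
    rw [hu, m.fin_add _ _ hd]
  unfold Jint
  rw [Finset.sum_congr rfl fun i _ => key i, Finset.sum_add_distrib, fiber_sum m A φ N]
  congr 1
  have : {x | x ∈ A ∧ φ x ≤ N} = A := by
    ext x; simp only [Set.mem_setOf_eq, and_iff_left_iff_imp]; intro _; exact h x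
  rw [this]

theorem Jint_add_indicator (m : Mean X) (A : Set X) {N P : ℕ} {φ : X → ℕ}
    (h : ∀ x, φ x ≤ N) (hP : N + 1 ≤ P) :
    Jint m P (fun x => φ x + ind A x) = Jint m P φ + m.m A := by
  rw [Jint_stable m (φ := fun x => φ x + ind A x)
      (N := N + 1) (fun x => by have h1 := h x; have h2 := ind_le_one A x; show φ x + ind A x ≤ N + 1; omega) hP,
    Jint_stable m (φ := φ) (N := N + 1) (fun x => by have := h x; omega) hP,
    Jint_add_indicator_core m A h]

theorem Jint_add (m : Mean X) {N M P : ℕ} {φ ψ : X → ℕ}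
    (hφ : ∀ x, φ x ≤ N) (hψ : ∀ x, ψ x ≤ M) (hP : N + M + 1 ≤ P) :
    Jint m P (fun x => φ x + ψ x) = Jint m P φ + Jint m P ψ := by
  induction M generalizing ψ with
  | zero =>
    have h0 : ∀ x, ψ x = 0 := fun x => Nat.le_zero.1 (hψ x)
    have e1 : (fun x => φ x + ψ x) = φ := funext fun x => by rw [h0 x]; ring
    have e2 : Jint m P ψ = 0 := by
      unfold Jint
      refine Finset.sum_eq_zero fun i _ => ?_
      have : {x | i + 1 ≤ ψ x} = (∅ : Set X) := by
        ext x; simp [h0 x]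
      rw [this, mean_empty]
    rw [e1, e2, add_zero]
  | succ n ih =>
    set A : Set X := {x | 1 ≤ ψ x} with hA
    set ψ' : X → ℕ := fun x => ψ x - 1 with hψ'
    have hdec : ∀ x, ψ x = ψ' x + ind A x := by
      intro x
      by_cases hx : 1 ≤ ψ x
      · have hxA : x ∈ A := hx
        simp [ind_of_mem hxA, hψ']; omega
      · have hxA : x ∉ A := hx
        simp [ind_of_not_mem hxA, hψ']; omega
    have hψ'b : ∀ x, ψ' x ≤ n := fun x => by have := hψ x; simp [hψ']; omega
    have e1 : (fun x => φ x + ψ x) = fun x => (φ x + ψ' x) + ind A x := by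
      funext x
      by_cases hx : x ∈ A
      · have h1 : 1 ≤ ψ x := hx
        simp only [ind_of_mem hx, hψ']; omega
      · have h1 : ¬ (1 ≤ ψ x) := hx
        simp only [ind_of_not_mem hx, hψ']; omega
    have e2 : Jint m P (fun x => φ x + ψ x) = Jint m P (fun x => φ x + ψ' x) + m.m A := by
      rw [e1]
      exact Jint_add_indicator m A (N := N + n) (P := P) (φ := fun x => φ x + ψ' x) (fun x => by have h1 := hφ x; have h2 := hψ'b x; show φ x + ψ' x ≤ N + n; omega) (by omega)
    have e3 : Jint m P ψ = Jint m P ψ' + m.m A := by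
      have eψ : ψ = fun x => ψ' x + ind A x := funext hdec
      conv_lhs => rw [eψ]
      exact Jint_add_indicator m A (N := n) (P := P) (φ := ψ') hψ'b (by omega)
    rw [e2, ih hψ'b (by omega), e3]; ring

theorem Jint_const (m : Mean X) {k N : ℕ} (hk : k ≤ N) :
    Jint m N (fun _ => k) = k := by
  induction k with
  | zero =>
    have he : ∀ i : ℕ, {x : X | i + 1 ≤ 0} = (∅ : Set X) := fun i => by ext x; simp
    unfold Jint
    push_cast
    exact Finset.sum_eq_zero fun i _ => by rw [Set.setOf_false]; exact mean_empty m
  | succ n ih =>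
    have e1 : (fun _ : X => n + 1) = fun x => n + ind (Set.univ : Set X) x := by
      funext x; simp [ind_of_mem (Set.mem_univ x)]
    rw [e1, Jint_add_indicator m (Set.univ : Set X) (N := n) (φ := fun _ => n) (fun _ => le_refl n) hk, ih (by omega), m.total]
    push_cast; ring

theorem Jint_smul (m : Mean X) {k N P : ℕ} {φ : X → ℕ} (hφ : ∀ x, φ x ≤ N)
    (hP : k * N + 1 ≤ P) :
    Jint m P (fun x => k * φ x) = k * Jint m P φ := by
  induction k with
  | zero =>
    have e : (fun x : X => 0 * φ x) = fun _ => (0:ℕ) := funext fun x => by ring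
    rw [e, Jint_const m (k := 0) (N := P) (Nat.zero_le P)]
    simp
  | succ n ih =>
    have e1 : (fun x => (n + 1) * φ x) = fun x => n * φ x + φ x := by
      funext x; ring
    rw [e1, Jint_add m (N := n * N) (M := N) (φ := fun x => n * φ x) (ψ := φ) (fun x => by have := hφ x; nlinarith) hφ (by nlinarith), ih (by nlinarith)]
    push_cast; ring


/-! ### Integration of `[0,1]`-valued functions against a mean -/

/-- `n`-th approximation of `f` by a `ℕ`-valued function. -/
noncomputable def natApprox (n : ℕ) (f : X → ℝ) : X → ℕ := fun x => ⌊(n : ℝ) * f x⌋₊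

/-- The set of approximate integrals. -/
noncomputable def Iset (m : Mean X) (f : X → ℝ) : Set ℝ :=
  {r | ∃ n : ℕ, 0 < n ∧ r = Jint m n (natApprox n f) / n}

/-- The integral of `f` against `m`. -/
noncomputable def Iint (m : Mean X) (f : X → ℝ) : ℝ := sSup (Iset m f)

theorem natApprox_le {f : X → ℝ} (hf1 : ∀ x, f x ≤ 1) (n : ℕ) (x : X) :
    natApprox n f x ≤ n := by
  have h1 : (n : ℝ) * f x ≤ (n : ℝ) :=
    mul_le_of_le_one_right (Nat.cast_nonneg n) (hf1 x)
  calc natApprox n f x ≤ ⌊(n : ℝ)⌋₊ := Nat.floor_mono h1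
    _ = n := Nat.floor_natCast n

theorem Iset_nonempty (m : Mean X) (f : X → ℝ) : (Iset m f).Nonempty :=
  ⟨_, 1, one_pos, rfl⟩

theorem Iset_bddAbove (m : Mean X) (f : X → ℝ) : BddAbove (Iset m f) := by
  refine ⟨1, ?_⟩
  rintro r ⟨n, hn, rfl⟩
  rw [div_le_one (by positivity)]
  exact Jint_le m n _

theorem Iint_nonneg (m : Mean X) (f : X → ℝ) : 0 ≤ Iint m f := by
  have h := le_csSup (Iset_bddAbove m f) ⟨1, one_pos, rfl⟩
  refine le_trans ?_ h
  have := Jint_nonneg m 1 (natApprox 1 f)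
  positivity

theorem Iint_lb (m : Mean X) (f : X → ℝ) {n : ℕ} (hn : 0 < n) :
    Jint m n (natApprox n f) / n ≤ Iint m f :=
  le_csSup (Iset_bddAbove m f) ⟨n, hn, rfl⟩

theorem Jint_mul_compare (m : Mean X) {f : X → ℝ} (hf0 : ∀ x, 0 ≤ f x) (hf1 : ∀ x, f x ≤ 1)
    {n k : ℕ} (hn : 0 < n) (hk : 0 < k) :
    Jint m k (natApprox k f) / k ≤ Jint m (k * n) (natApprox (k * n) f) / (k * n) ∧
    Jint m (k * n) (natApprox (k * n) f) / (k * n) ≤ Jint m n (natApprox n f) / n + 1 / n := by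
  have hb : ∀ j : ℕ, ∀ x, natApprox j f x ≤ j := fun j x => natApprox_le hf1 j x
  constructor
  · -- lower estimate
    have hpt : ∀ x, n * natApprox k f x ≤ natApprox (k * n) f x := by
      intro x
      apply Nat.le_floor
      have h1 : (⌊(k : ℝ) * f x⌋₊ : ℝ) ≤ (k : ℝ) * f x :=
        Nat.floor_le (by have := hf0 x; positivity)
      push_cast
      calc (n : ℝ) * (⌊(k : ℝ) * f x⌋₊ : ℝ) ≤ (n : ℝ) * ((k : ℝ) * f x) := by
            apply mul_le_mul_of_nonneg_left h1 (Nat.cast_nonneg n)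
        _ = (k : ℝ) * (n : ℝ) * f x := by ring
    have h2 : (n : ℝ) * Jint m k (natApprox k f) ≤ Jint m (k * n) (natApprox (k * n) f) := by
      have e1 : Jint m (k * n) (natApprox (k * n) f)
          = Jint m (k * n + 1) (natApprox (k * n) f) :=
        (Jint_stable m (hb (k * n)) (by omega)).symm
      have e2 : Jint m (k * n + 1) (fun x => n * natApprox k f x)
          = (n : ℝ) * Jint m (k * n + 1) (natApprox k f) :=
        Jint_smul m (hb k) (by nlinarith)
      have e3 : Jint m (k * n + 1) (natApprox k f) = Jint m k (natApprox k f) :=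
        Jint_stable m (hb k) (by nlinarith)
      rw [e1, ← e3, ← e2]
      exact Jint_mono m _ hpt
    rw [div_le_div_iff₀ (by positivity) (by push_cast; positivity)]
    push_cast
    nlinarith [Jint_nonneg m k (natApprox k f)]
  · -- upper estimate
    have hpt : ∀ x, natApprox (k * n) f x ≤ k * natApprox n f x + k := by
      intro x
      have ha : (natApprox (k * n) f x : ℝ) ≤ ((k * n : ℕ) : ℝ) * f x := by
        unfold natApprox
        exact Nat.floor_le (by have := hf0 x; positivity)
      push_cast at ha
      have h2 : (n : ℝ) * f x < (natApprox n f x : ℝ) + 1 := by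
        unfold natApprox
        exact Nat.lt_floor_add_one _
      have hkR : (0:ℝ) < (k : ℝ) := by exact_mod_cast hk
      have h3 : (natApprox (k * n) f x : ℝ) < (k : ℝ) * (natApprox n f x : ℝ) + (k : ℝ) := by
        nlinarith
      have h4 : natApprox (k * n) f x < k * natApprox n f x + k := by
        exact_mod_cast h3
      omega
    set P := k * n + k + 1 with hP
    have e1 : Jint m (k * n) (natApprox (k * n) f) = Jint m P (natApprox (k * n) f) :=
      (Jint_stable m (hb (k * n)) (by omega)).symm
    have e2 : Jint m P (fun x => k * natApprox n f x + k)
        = Jint m P (fun x => k * natApprox n f x) + Jint m P (fun _ => k) :=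
      Jint_add m (N := k * n) (M := k) (φ := fun x => k * natApprox n f x)
        (ψ := fun _ => k)
        (fun x => by have := hb n x; nlinarith) (fun _ => le_refl k) (by omega)
    have e3 : Jint m P (fun x => k * natApprox n f x) = (k : ℝ) * Jint m P (natApprox n f) :=
      Jint_smul m (hb n) (by omega)
    have e4 : Jint m P (natApprox n f) = Jint m n (natApprox n f) :=
      Jint_stable m (hb n) (by nlinarith)
    have e5 : Jint m P (fun _ => k) = (k : ℝ) := Jint_const m (by omega)
    have h6 : Jint m (k * n) (natApprox (k * n) f)
        ≤ (k : ℝ) * Jint m n (natApprox n f) + (k : ℝ) := by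
      rw [e1]
      calc Jint m P (natApprox (k * n) f) ≤ Jint m P (fun x => k * natApprox n f x + k) :=
            Jint_mono m P hpt
        _ = (k : ℝ) * Jint m n (natApprox n f) + (k : ℝ) := by rw [e2, e3, e4, e5]
    rw [← add_div, div_le_div_iff₀ (by push_cast; positivity) (by positivity)]
    push_cast
    nlinarith [h6]

theorem Iint_ub (m : Mean X) {f : X → ℝ} (hf0 : ∀ x, 0 ≤ f x) (hf1 : ∀ x, f x ≤ 1)
    {n : ℕ} (hn : 0 < n) :
    Iint m f ≤ Jint m n (natApprox n f) / n + 1 / n := by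
  apply csSup_le (Iset_nonempty m f)
  rintro r ⟨k, hk, rfl⟩
  calc Jint m k (natApprox k f) / k ≤ Jint m (k * n) (natApprox (k * n) f) / (k * n) :=
        (Jint_mul_compare m hf0 hf1 hn hk).1
    _ ≤ Jint m n (natApprox n f) / n + 1 / n := (Jint_mul_compare m hf0 hf1 hn hk).2

theorem Iint_indicator (m : Mean X) (A : Set X) {f : X → ℝ}
    (h1 : ∀ x ∈ A, f x = 1) (h0 : ∀ x ∉ A, f x = 0) : Iint m f = m.m A := by
  have key : ∀ n : ℕ, 0 < n → Jint m n (natApprox n f) / n = m.m A := by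
    intro n hn
    have hset : ∀ i ∈ Finset.range n, {x | i + 1 ≤ natApprox n f x} = A := by
      intro i hi
      rw [Finset.mem_range] at hi
      ext x
      simp only [Set.mem_setOf_eq]
      by_cases hx : x ∈ A
      · simp only [hx, iff_true]
        have : natApprox n f x = n := by
          unfold natApprox
          rw [h1 x hx, mul_one, Nat.floor_natCast]
        omega
      · simp only [hx, iff_false]
        have : natApprox n f x = 0 := by
          unfold natApprox
          rw [h0 x hx, mul_zero]
          simp
        omega
    unfold Jint
    rw [Finset.sum_congr rfl fun i hi => by rw [hset i hi]]
    rw [Finset.sum_const, Finset.card_range, nsmul_eq_mul]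
    field_simp
  have hIs : Iset m f = {m.m A} := by
    ext r
    constructor
    · rintro ⟨n, hn, rfl⟩
      exact key n hn
    · rintro rfl
      exact ⟨1, one_pos, (key 1 one_pos).symm⟩
  rw [Iint, hIs, csSup_singleton]

theorem le_of_forall_le_add_div {a b C : ℝ} (hC : 0 ≤ C)
    (h : ∀ n : ℕ, 0 < n → a ≤ b + C / n) : a ≤ b := by
  refine le_of_forall_pos_le_add fun ε hε => ?_
  obtain ⟨n, hn⟩ := exists_nat_gt (max 1 (C / ε))
  have hn1 : (1:ℝ) ≤ n := le_trans (le_max_left _ _) hn.le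
  have hn0 : 0 < n := by exact_mod_cast lt_of_lt_of_le one_pos hn1
  have h2 : C / n ≤ ε := by
    rw [div_le_iff₀ (by positivity)]
    have h3 : C / ε < n := lt_of_le_of_lt (le_max_right _ _) hn
    rw [div_lt_iff₀ hε] at h3
    nlinarith
  calc a ≤ b + C / n := h n hn0
    _ ≤ b + ε := by linarith

theorem Iint_add (m : Mean X) {f g : X → ℝ} (hf0 : ∀ x, 0 ≤ f x) (hg0 : ∀ x, 0 ≤ g x)
    (hfg : ∀ x, f x + g x ≤ 1) :
    Iint m (fun x => f x + g x) = Iint m f + Iint m g := by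
  have hf1 : ∀ x, f x ≤ 1 := fun x => by have := hg0 x; have := hfg x; linarith
  have hg1 : ∀ x, g x ≤ 1 := fun x => by have := hf0 x; have := hfg x; linarith
  have hs0 : ∀ x, 0 ≤ f x + g x := fun x => by have := hf0 x; have := hg0 x; linarith
  have key : ∀ n : ℕ, 0 < n →
      Jint m n (natApprox n f) + Jint m n (natApprox n g)
        ≤ Jint m n (natApprox n (fun x => f x + g x)) ∧
      Jint m n (natApprox n (fun x => f x + g x))
        ≤ Jint m n (natApprox n f) + Jint m n (natApprox n g) + 1 := by
    intro n hn
    have hbf := fun x => natApprox_le hf1 n x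
    have hbg := fun x => natApprox_le hg1 n x
    have hbs := fun x => natApprox_le hfg n x
    have hpt1 : ∀ x, natApprox n f x + natApprox n g x ≤ natApprox n (fun x => f x + g x) x := by
      intro x
      have e1 : (natApprox n f x : ℝ) ≤ (n : ℝ) * f x := by
        unfold natApprox; exact Nat.floor_le (by have := hf0 x; positivity)
      have e2 : (natApprox n g x : ℝ) ≤ (n : ℝ) * g x := by
        unfold natApprox; exact Nat.floor_le (by have := hg0 x; positivity)
      show natApprox n f x + natApprox n g x ≤ ⌊(n : ℝ) * (f x + g x)⌋₊
      apply Nat.le_floor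
      push_cast
      nlinarith
    have hpt2 : ∀ x, natApprox n (fun x => f x + g x) x
        ≤ natApprox n f x + natApprox n g x + 1 := by
      intro x
      have e1 : (n : ℝ) * f x < (natApprox n f x : ℝ) + 1 := by
        unfold natApprox; exact Nat.lt_floor_add_one _
      have e2 : (n : ℝ) * g x < (natApprox n g x : ℝ) + 1 := by
        unfold natApprox; exact Nat.lt_floor_add_one _
      have e3 : (natApprox n (fun x => f x + g x) x : ℝ) ≤ (n : ℝ) * (f x + g x) := by
        unfold natApprox; exact Nat.floor_le (by have := hs0 x; positivity)
      have h4 : (natApprox n (fun x => f x + g x) x : ℝ)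
          < ((natApprox n f x + natApprox n g x + 1 + 1 : ℕ) : ℝ) := by
        push_cast
        nlinarith
      have h5 : natApprox n (fun x => f x + g x) x
          < natApprox n f x + natApprox n g x + 1 + 1 := by
        exact_mod_cast h4
      omega
    set P := 2 * n + 2 with hPdef
    have s1 : Jint m n (natApprox n (fun x => f x + g x))
        = Jint m P (natApprox n (fun x => f x + g x)) := (Jint_stable m hbs (by omega)).symm
    have s2 : Jint m P (fun x => natApprox n f x + natApprox n g x)
        = Jint m P (natApprox n f) + Jint m P (natApprox n g) :=
      Jint_add m (N := n) (M := n) (φ := natApprox n f) (ψ := natApprox n g)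
        hbf hbg (by omega)
    have s3 : Jint m P (natApprox n f) = Jint m n (natApprox n f) := Jint_stable m hbf (by omega)
    have s4 : Jint m P (natApprox n g) = Jint m n (natApprox n g) := Jint_stable m hbg (by omega)
    have s5 : Jint m P (fun x => natApprox n f x + natApprox n g x + 1)
        = Jint m P (fun x => natApprox n f x + natApprox n g x) + Jint m P (fun _ => 1) :=
      Jint_add m (N := 2 * n) (M := 1) (φ := fun x => natApprox n f x + natApprox n g x)
        (ψ := fun _ => 1) (fun x => by have h1 := hbf x; have h2 := hbg x; show natApprox n f x + natApprox n g x ≤ 2 * n; omega)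
        (fun _ => le_refl 1) (by omega)
    have s6 : Jint m P (fun _ => 1) = 1 := by
      have := Jint_const m (k := 1) (N := P) (by omega)
      simpa using this
    constructor
    · rw [s1, ← s3, ← s4, ← s2]
      exact Jint_mono m P hpt1
    · rw [s1]
      calc Jint m P (natApprox n (fun x => f x + g x))
          ≤ Jint m P (fun x => natApprox n f x + natApprox n g x + 1) := Jint_mono m P hpt2
        _ = Jint m n (natApprox n f) + Jint m n (natApprox n g) + 1 := by
            rw [s5, s2, s3, s4, s6]
  apply le_antisymm
  · apply le_of_forall_le_add_div (C := 2) (by norm_num)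
    intro n hn
    have hnR : (0:ℝ) < n := by exact_mod_cast hn
    have u1 := Iint_ub m hs0 hfg hn
    have u2 := Iint_lb m f hn
    have u3 := Iint_lb m g hn
    have u4 := (key n hn).2
    have : Jint m n (natApprox n (fun x => f x + g x)) / n
        ≤ Jint m n (natApprox n f) / n + Jint m n (natApprox n g) / n + 1 / n := by
      rw [← add_div, ← add_div, div_le_div_iff₀ hnR hnR]
      nlinarith
    calc Iint m (fun x => f x + g x) ≤ Jint m n (natApprox n (fun x => f x + g x)) / n + 1 / n := u1
      _ ≤ Jint m n (natApprox n f) / n + Jint m n (natApprox n g) / n + 1 / n + 1 / n := by linarith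
      _ ≤ Iint m f + Iint m g + 2 / n := by
          have : (1:ℝ)/n + 1/n = 2/n := by ring
          linarith
  · apply le_of_forall_le_add_div (C := 2) (by norm_num)
    intro n hn
    have hnR : (0:ℝ) < n := by exact_mod_cast hn
    have u1 := Iint_ub m hf0 hf1 hn
    have u2 := Iint_ub m hg0 hg1 hn
    have u3 := Iint_lb m (fun x => f x + g x) hn
    have u4 := (key n hn).1
    have : Jint m n (natApprox n f) / n + Jint m n (natApprox n g) / n
        ≤ Jint m n (natApprox n (fun x => f x + g x)) / n := by
      rw [← add_div, div_le_div_iff₀ hnR hnR]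
      nlinarith
    calc Iint m f + Iint m g
        ≤ Jint m n (natApprox n f) / n + 1 / n + (Jint m n (natApprox n g) / n + 1 / n) := by
          linarith
      _ ≤ Jint m n (natApprox n (fun x => f x + g x)) / n + 2 / n := by
          have : (1:ℝ)/n + 1/n = 2/n := by ring
          linarith
      _ ≤ Iint m (fun x => f x + g x) + 2 / n := by linarith

theorem Iint_comp (m : Mean X) (T : X → X) (hT : ∀ S : Set X, m.m (T ⁻¹' S) = m.m S)
    (f : X → ℝ) : Iint m (fun x => f (T x)) = Iint m f := by
  have hJ : ∀ n : ℕ, Jint m n (natApprox n (fun x => f (T x))) = Jint m n (natApprox n f) := by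
    intro n
    unfold Jint
    refine Finset.sum_congr rfl fun i _ => ?_
    have : {x | i + 1 ≤ natApprox n (fun x => f (T x)) x}
        = T ⁻¹' {x | i + 1 ≤ natApprox n f x} := rfl
    rw [this, hT]
  have : Iset m (fun x => f (T x)) = Iset m f := by
    ext r
    constructor
    · rintro ⟨n, hn, rfl⟩
      exact ⟨n, hn, by rw [hJ]⟩
    · rintro ⟨n, hn, rfl⟩
      exact ⟨n, hn, by rw [hJ]⟩
  rw [Iint, this, Iint]


/-! ### Transport of amenability -/

theorem amenable_congr {G₁ G₂ : Type*} [Group G₁] [Group G₂] (e : G₁ ≃* G₂)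
    (h : AmenableGroup G₁) : AmenableGroup G₂ := by
  obtain ⟨μ, hμ⟩ := h
  refine ⟨⟨fun A => μ.m (e.symm '' A), fun A => μ.nonneg _, ?_, ?_⟩, ?_⟩
  · rw [Set.image_univ, Set.range_eq_univ.2 e.symm.surjective, μ.total]
  · intro A B hAB
    rw [Set.image_union]
    exact μ.fin_add _ _ (Set.disjoint_image_of_injective e.symm.injective hAB)
  · intro g A
    show μ.m (e.symm '' ((fun x => g * x) '' A)) = μ.m (e.symm '' A)
    rw [← Set.image_comp]
    have : (e.symm ∘ fun x => g * x) = fun x => e.symm g * e.symm x := by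
      funext x; simp [map_mul]
    rw [this, show (fun x : G₂ => e.symm g * e.symm x) = (fun y => e.symm g * y) ∘ e.symm
      from rfl, Set.image_comp]
    exact hμ (e.symm g) _

variable {G : Type*} [Group G]

theorem amenable_map_iff (h : G) (K : Subgroup G) :
    AmenableGroup ↥(Subgroup.map (MulAut.conj h).toMonoidHom K) ↔ AmenableGroup ↥K := by
  have hinj : Function.Injective (MulAut.conj h).toMonoidHom := (MulAut.conj h).injective
  constructor
  · exact amenable_congr (K.equivMapOfInjective _ hinj).symm
  · exact amenable_congr (K.equivMapOfInjective _ hinj)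

theorem centralizer_conj (h g : G) :
    Subgroup.centralizer {h * g * h⁻¹}
      = Subgroup.map (MulAut.conj h).toMonoidHom (Subgroup.centralizer {g}) := by
  ext x
  rw [Subgroup.mem_map]
  simp only [Subgroup.mem_centralizer_iff, Set.mem_singleton_iff, forall_eq,
    MulEquiv.toMonoidHom_eq_coe, MonoidHom.coe_coe, MulAut.conj_apply]
  constructor
  · intro hx
    refine ⟨h⁻¹ * x * h, ?_, by group⟩
    have : (h * g * h⁻¹) * x = x * (h * g * h⁻¹) := hx
    have h2 : g * (h⁻¹ * x * h) = h⁻¹ * ((h * g * h⁻¹) * x) * h := by group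
    rw [h2, this]; group
  · rintro ⟨y, hy, rfl⟩
    have : g * y = y * g := hy
    have h2 : h * g * h⁻¹ * (h * y * h⁻¹) = h * (g * y) * h⁻¹ := by group
    rw [h2, this]; group

theorem map_conj_of_mem {L : Subgroup G} {h : G} (hh : h ∈ L) :
    Subgroup.map (MulAut.conj h).toMonoidHom L = L := by
  ext x
  rw [Subgroup.mem_map]
  simp only [MulEquiv.toMonoidHom_eq_coe, MonoidHom.coe_coe, MulAut.conj_apply]
  constructor
  · rintro ⟨y, hy, rfl⟩
    exact Subgroup.mul_mem _ (Subgroup.mul_mem _ hh hy) (Subgroup.inv_mem _ hh)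
  · intro hx
    refine ⟨h⁻¹ * x * h, ?_, by group⟩
    exact Subgroup.mul_mem _ (Subgroup.mul_mem _ (Subgroup.inv_mem _ hh) hx) hh

theorem inf_centralizer_conj {L : Subgroup G} {h : G} (hh : h ∈ L) (g : G) :
    L ⊓ Subgroup.centralizer {h * g * h⁻¹}
      = Subgroup.map (MulAut.conj h).toMonoidHom (L ⊓ Subgroup.centralizer {g}) := by
  rw [Subgroup.map_inf _ _ _ (MulAut.conj h).injective, map_conj_of_mem hh,
    centralizer_conj]

/-- A mean on a subgroup induces a mean on the whole group supported on the subgroup and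
invariant under left translation by elements of the subgroup. -/
theorem mean_on_subgroup (K : Subgroup G) (hK : AmenableGroup ↥K) :
    ∃ ν : Mean G, ν.m ↑K = 1 ∧ ∀ k ∈ K, ∀ A : Set G,
      ν.m ((fun x => k * x) '' A) = ν.m A := by
  obtain ⟨μ, hμ⟩ := hK
  refine ⟨⟨fun A => μ.m ((fun y : ↥K => (y : G)) ⁻¹' A), fun A => μ.nonneg _, ?_, ?_⟩, ?_, ?_⟩
  · rw [Set.preimage_univ, μ.total]
  · intro A B hAB
    rw [Set.preimage_union]
    exact μ.fin_add _ _ (Disjoint.preimage _ hAB)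
  · show μ.m ((fun y : ↥K => (y : G)) ⁻¹' ↑K) = 1
    have : ((fun y : ↥K => (y : G)) ⁻¹' ↑K) = Set.univ := by
      ext y; simp [y.2]
    rw [this, μ.total]
  · intro k hk A
    show μ.m ((fun y : ↥K => (y : G)) ⁻¹' ((fun x => k * x) '' A))
      = μ.m ((fun y : ↥K => (y : G)) ⁻¹' A)
    have key : ((fun y : ↥K => (y : G)) ⁻¹' ((fun x => k * x) '' A))
        = (fun y : ↥K => (⟨k, hk⟩ : ↥K) * y) '' ((fun y : ↥K => (y : G)) ⁻¹' A) := by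
      ext y
      simp only [Set.mem_preimage, Set.mem_image]
      constructor
      · rintro ⟨a, ha, hay⟩
        refine ⟨⟨k, hk⟩⁻¹ * y, ?_, by group⟩
        show ((⟨k, hk⟩ : ↥K)⁻¹ * y : ↥K) ∈ (fun y : ↥K => (y : G)) ⁻¹' A
        simp only [Set.mem_preimage]
        have : ((⟨k, hk⟩⁻¹ * y : ↥K) : G) = k⁻¹ * (y : G) := rfl
        rw [this, ← hay]
        simpa using ha
      · rintro ⟨z, hz, rfl⟩
        exact ⟨(z : G), hz, rfl⟩
    rw [key]
    exact hμ ⟨k, hk⟩ _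


theorem null_biUnion {X : Type*} (m : Mean X) {ι : Type*} (F : Finset ι) (S : ι → Set X)
    (h : ∀ i ∈ F, m.m (S i) = 0) : m.m (⋃ i ∈ F, S i) = 0 := by
  classical
  induction F using Finset.induction_on with
  | empty =>
    rw [show (⋃ i ∈ (∅ : Finset ι), S i) = (∅ : Set X) by simp]
    exact mean_empty m
  | @insert a Fs ha ih =>
    rw [Finset.set_biUnion_insert]
    have h1 := mean_subadd m (S a) (⋃ i ∈ Fs, S i)
    have h2 := ih fun i hi => h i (Finset.mem_insert_of_mem hi)
    have h3 := h a (Finset.mem_insert_self a Fs)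
    have h4 := m.nonneg (S a ∪ ⋃ i ∈ Fs, S i)
    linarith

/-- The key lemma: the set of `g` with `L ⊓ C_G(g)` amenable is null for any
`H`-conjugation-invariant mean, when `L ≤ H` is nonamenable. -/
theorem null_of_nonamenable {G : Type*} [Group G] (H : Subgroup G) (m : Mean G)
    (hm : ∀ h ∈ H, ∀ A : Set G, m.m ((fun x => h * x * h⁻¹) '' A) = m.m A)
    (L : Subgroup G) (hLH : L ≤ H) (hL : ¬ AmenableGroup ↥L) :
    m.m {g : G | AmenableGroup ↥(L ⊓ Subgroup.centralizer {g})} = 0 := by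
  classical
  set B : Set G := {g : G | AmenableGroup ↥(L ⊓ Subgroup.centralizer {g})} with hBdef
  by_contra hB0
  have hBpos : 0 < m.m B := lt_of_le_of_ne (m.nonneg B) (Ne.symm hB0)
  have hBinv : ∀ h ∈ L, ∀ g ∈ B, h * g * h⁻¹ ∈ B := by
    intro h hh g hg
    show AmenableGroup ↥(L ⊓ Subgroup.centralizer {h * g * h⁻¹})
    rw [inf_centralizer_conj hh g]
    exact (amenable_map_iff h _).2 hg
  have hBinv' : ∀ h ∈ L, ∀ g, h * g * h⁻¹ ∈ B ↔ g ∈ B := by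
    intro h hh g
    constructor
    · intro hg
      have h2 := hBinv h⁻¹ (Subgroup.inv_mem _ hh) _ hg
      have e : h⁻¹ * (h * g * h⁻¹) * h⁻¹⁻¹ = g := by group
      rwa [e] at h2
    · exact hBinv h hh g
  -- the normalized restriction of `m` to `B`
  obtain ⟨μ, hμdef⟩ : ∃ μ : Mean G, ∀ A, μ.m A = m.m (A ∩ B) / m.m B := by
    refine ⟨⟨fun A => m.m (A ∩ B) / m.m B, ?_, ?_, ?_⟩, fun A => rfl⟩
    · intro A
      have := m.nonneg (A ∩ B)
      positivity
    · rw [Set.univ_inter]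
      exact div_self (ne_of_gt hBpos)
    · intro A A' hd
      rw [Set.union_inter_distrib_right,
        m.fin_add _ _ (hd.mono Set.inter_subset_left Set.inter_subset_left), add_div]
  have hμconj : ∀ h ∈ L, ∀ S : Set G, μ.m ((fun x => h * x * h⁻¹) '' S) = μ.m S := by
    intro h hh S
    rw [hμdef, hμdef]
    have e : ((fun x => h * x * h⁻¹) '' S) ∩ B = (fun x => h * x * h⁻¹) '' (S ∩ B) := by
      ext x
      simp only [Set.mem_inter_iff, Set.mem_image]
      constructor
      · rintro ⟨⟨s, hs, rfl⟩, hxB⟩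
        exact ⟨s, ⟨hs, (hBinv' h hh s).1 hxB⟩, rfl⟩
      · rintro ⟨s, ⟨hs, hsB⟩, rfl⟩
        exact ⟨⟨s, hs, rfl⟩, hBinv h hh s hsB⟩
    rw [e, hm h (hLH hh) (S ∩ B)]
  -- orbit representatives for the conjugation action of `L`
  have srefl : ∀ a : G, ∃ h, h ∈ L ∧ h * a * h⁻¹ = a := fun a => ⟨1, Subgroup.one_mem L, by group⟩
  have ssymm : ∀ {a b : G}, (∃ h, h ∈ L ∧ h * a * h⁻¹ = b) →
      ∃ h, h ∈ L ∧ h * b * h⁻¹ = a := by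
    rintro a b ⟨h, hh, rfl⟩
    exact ⟨h⁻¹, Subgroup.inv_mem _ hh, by group⟩
  have strans : ∀ {a b c : G}, (∃ h, h ∈ L ∧ h * a * h⁻¹ = b) →
      (∃ h, h ∈ L ∧ h * b * h⁻¹ = c) → ∃ h, h ∈ L ∧ h * a * h⁻¹ = c := by
    rintro a b c ⟨h1, hh1, rfl⟩ ⟨h2, hh2, rfl⟩
    exact ⟨h2 * h1, Subgroup.mul_mem _ hh2 hh1, by group⟩
  set s : Setoid G := ⟨fun a b => ∃ h, h ∈ L ∧ h * a * h⁻¹ = b,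
    ⟨srefl, ssymm, strans⟩⟩ with hs
  set rep : G → G := fun g => (Quotient.mk s g).out with hrepdef
  have hrep_spec : ∀ g, ∃ h, h ∈ L ∧ h * rep g * h⁻¹ = g := by
    intro g
    have h1 : Quotient.mk s (rep g) = Quotient.mk s g := Quotient.out_eq _
    exact Quotient.exact h1
  have hrep_conj : ∀ h ∈ L, ∀ g, rep (h * g * h⁻¹) = rep g := by
    intro h hh g
    have h1 : Quotient.mk s g = Quotient.mk s (h * g * h⁻¹) := Quotient.sound ⟨h, hh, rfl⟩
    show (Quotient.mk s (h * g * h⁻¹)).out = (Quotient.mk s g).out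
    rw [h1]
  have hrep_idem : ∀ g, rep (rep g) = rep g := by
    intro g
    show (Quotient.mk s ((Quotient.mk s g).out)).out = (Quotient.mk s g).out
    rw [Quotient.out_eq]
  choose t ht1 ht2 using hrep_spec
  have hrepB : ∀ g ∈ B, rep g ∈ B := by
    intro g hg
    have h2 := ht2 g
    have e : (t g)⁻¹ * g * ((t g)⁻¹)⁻¹ = rep g := by
      rw [inv_inv]
      calc (t g)⁻¹ * g * t g = (t g)⁻¹ * (t g * rep g * (t g)⁻¹) * t g := by rw [h2]
        _ = rep g := by group
    rw [← e]
    exact hBinv _ (Subgroup.inv_mem _ (ht1 g)) g hg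
  set K : G → Subgroup G := fun g => L ⊓ Subgroup.centralizer {rep g} with hKdef
  have hKamen : ∀ g ∈ B, AmenableGroup ↥(K g) := fun g hg => hrepB g hg
  have hνex : ∀ g : G, ∃ ν : Mean G, g ∈ B → (ν.m ↑(K g) = 1 ∧
      ∀ k ∈ K g, ∀ A : Set G, ν.m ((fun x => k * x) '' A) = ν.m A) := by
    intro g
    by_cases hg : g ∈ B
    · obtain ⟨ν, h1, h2⟩ := mean_on_subgroup (K g) (hKamen g hg)
      exact ⟨ν, fun _ => ⟨h1, h2⟩⟩
    · exact ⟨deltaMean 1, fun h => absurd h hg⟩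
  choose ν hν using hνex
  have hKrep : ∀ g, K (rep g) = K g := by
    intro g
    show L ⊓ Subgroup.centralizer {rep (rep g)} = L ⊓ Subgroup.centralizer {rep g}
    rw [hrep_idem]
  have hlam : ∀ g ∈ B, (ν (rep g)).m ↑(K g) = 1 ∧
      ∀ k ∈ K g, ∀ A : Set G, (ν (rep g)).m ((fun x => k * x) '' A) = (ν (rep g)).m A := by
    intro g hg
    have h1 := hν (rep g) (hrepB g hg)
    rwa [hKrep] at h1
  set fA : Set G → G → ℝ :=
    fun A g => if g ∈ B then (ν (rep g)).m {x | t g * x ∈ A} else 0 with hfAdef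
  have hfA0 : ∀ (A : Set G) (g : G), 0 ≤ fA A g := by
    intro A g
    by_cases hg : g ∈ B
    · simp only [hfAdef, if_pos hg]
      exact (ν (rep g)).nonneg _
    · simp [hfAdef, if_neg hg]
  have hfA1 : ∀ (A : Set G) (g : G), fA A g ≤ 1 := by
    intro A g
    by_cases hg : g ∈ B
    · simp only [hfAdef, if_pos hg]
      exact mean_le_one _ _
    · simp [hfAdef, if_neg hg]
  have hfB : ∀ (A : Set G), (∀ g ∈ B, fA A g = 1) → Iint μ (fA A) = 1 := by
    intro A hA1
    have h1 := Iint_indicator μ B (f := fA A) hA1 (fun g hg => by simp [hfAdef, if_neg hg])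
    rw [h1, hμdef, Set.inter_self]
    exact div_self (ne_of_gt hBpos)
  have hMtotal : Iint μ (fA Set.univ) = 1 := by
    refine hfB Set.univ fun g hg => ?_
    simp only [hfAdef, if_pos hg]
    have e : {x | t g * x ∈ (Set.univ : Set G)} = Set.univ := by ext x; simp
    rw [e, (ν (rep g)).total]
  have hMadd : ∀ A A' : Set G, Disjoint A A' →
      Iint μ (fA (A ∪ A')) = Iint μ (fA A) + Iint μ (fA A') := by
    intro A A' hd
    have hsplit : ∀ g, fA (A ∪ A') g = fA A g + fA A' g := by
      intro g
      by_cases hg : g ∈ B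
      · simp only [hfAdef, if_pos hg]
        have hu : {x | t g * x ∈ A ∪ A'} = {x | t g * x ∈ A} ∪ {x | t g * x ∈ A'} := by
          ext x; simp [Set.mem_union]
        have hdx : Disjoint {x | t g * x ∈ A} {x | t g * x ∈ A'} := by
          rw [Set.disjoint_left]
          intro x hx hx'
          exact Set.disjoint_left.1 hd hx hx'
        rw [hu, (ν (rep g)).fin_add _ _ hdx]
      · simp [hfAdef, if_neg hg]
    have h1 := Iint_add μ (f := fA A) (g := fA A') (hfA0 A) (hfA0 A')
      (fun g => by rw [← hsplit g]; exact hfA1 _ g)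
    rw [← h1]
    congr 1
    funext g
    exact hsplit g
  have hML : Iint μ (fA ↑L) = 1 := by
    refine hfB ↑L fun g hg => ?_
    simp only [hfAdef, if_pos hg]
    have hsub : (↑(K g) : Set G) ⊆ {x | t g * x ∈ (↑L : Set G)} := by
      intro x hx
      have hxL : x ∈ L := (Subgroup.mem_inf.1 hx).1
      exact Subgroup.mul_mem _ (ht1 g) hxL
    have h1 := (hlam g hg).1
    have h2 := mean_mono (ν (rep g)) hsub
    have h3 := mean_le_one (ν (rep g)) {x | t g * x ∈ (↑L : Set G)}
    rw [h1] at h2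
    linarith
  have hMinv : ∀ h ∈ L, ∀ A : Set G,
      Iint μ (fA ((fun x => h * x) '' A)) = Iint μ (fA A) := by
    intro h hh A
    set T : G → G := fun g => h⁻¹ * g * h with hTdef
    have hfT : ∀ g, fA ((fun x => h * x) '' A) g = fA A (T g) := by
      intro g
      by_cases hg : g ∈ B
      · have hTg : T g ∈ B := by
          have h2 := hBinv h⁻¹ (Subgroup.inv_mem _ hh) g hg
          have e : h⁻¹ * g * h⁻¹⁻¹ = T g := by simp only [hTdef]; group
          rwa [e] at h2
        simp only [hfAdef, if_pos hg, if_pos hTg]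
        have hrT : rep (T g) = rep g := by
          have h2 := hrep_conj h⁻¹ (Subgroup.inv_mem _ hh) g
          have e : h⁻¹ * g * h⁻¹⁻¹ = T g := by simp only [hTdef]; group
          rwa [e] at h2
        rw [hrT]
        set tau : G := t g with htaudef
        set tau' : G := t (T g) with htaudef'
        have htauL : tau ∈ L := by rw [htaudef]; exact ht1 g
        have htauL' : tau' ∈ L := by rw [htaudef']; exact ht1 (T g)
        have e1 : tau * rep g * tau⁻¹ = g := by rw [htaudef]; exact ht2 g
        have e2 : tau' * rep g * tau'⁻¹ = T g := by
          rw [htaudef', ← hrT]; exact ht2 (T g)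
        have hTval : T g = h⁻¹ * g * h := by simp only [hTdef]
        set k : G := tau⁻¹ * h * tau' with hkdef
        have hkK : k ∈ K g := by
          rw [hKdef, Subgroup.mem_inf]
          constructor
          · exact Subgroup.mul_mem _
              (Subgroup.mul_mem _ (Subgroup.inv_mem _ htauL) hh) htauL'
          · rw [Subgroup.mem_centralizer_iff]
            intro y hy
            rw [Set.mem_singleton_iff] at hy
            subst hy
            have key : tau' * rep g * tau'⁻¹ = h⁻¹ * (tau * rep g * tau⁻¹) * h := by
              rw [e1, e2] <;> try exact hTval
            show rep g * k = k * rep g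
            rw [hkdef]
            have c1 : tau * (rep g * (tau⁻¹ * h * tau'))
                = (tau * rep g * tau⁻¹) * h * tau' := by group
            have c2 : tau * ((tau⁻¹ * h * tau') * rep g)
                = h * (tau' * rep g * tau'⁻¹) * tau' := by group
            rw [e1] at c1
            rw [key, e1] at c2
            have c3 : h * (h⁻¹ * g * h) * tau' = g * h * tau' := by group
            rw [c3] at c2
            exact mul_left_cancel (c1.trans c2.symm)
        have hset : {x | tau * x ∈ (fun x => h * x) '' A}
            = (fun x => k * x) '' {x | tau' * x ∈ A} := by
          ext x
          simp only [Set.mem_setOf_eq, Set.mem_image]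
          constructor
          · rintro ⟨a, ha, hax⟩
            refine ⟨k⁻¹ * x, ?_, by group⟩
            show tau' * (k⁻¹ * x) ∈ A
            have e6 : tau' * (k⁻¹ * x) = h⁻¹ * (tau * x) := by
              rw [hkdef]; group
            have e7 : h⁻¹ * (tau * x) = a := by rw [← hax]; group
            rw [e6, e7]
            exact ha
          · rintro ⟨y, hy, rfl⟩
            exact ⟨tau' * y, hy, by rw [hkdef]; group⟩
        show (ν (rep g)).m {x | tau * x ∈ (fun x => h * x) '' A}
          = (ν (rep g)).m {x | tau' * x ∈ A}
        rw [hset, (hlam g hg).2 k hkK _]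
      · have hTg : T g ∉ B := by
          intro hc
          apply hg
          have h2 := hBinv h hh _ hc
          have e : h * (T g) * h⁻¹ = g := by rw [hTdef]; group
          rwa [e] at h2
        simp [hfAdef, if_neg hg, if_neg hTg]
    have hTinv : ∀ S : Set G, μ.m (T ⁻¹' S) = μ.m S := by
      intro S
      have e : T ⁻¹' S = (fun x => h * x * h⁻¹) '' S := by
        ext x
        simp only [Set.mem_preimage, Set.mem_image, hTdef]
        constructor
        · intro hx
          exact ⟨h⁻¹ * x * h, hx, by group⟩
        · rintro ⟨y, hy, rfl⟩
          have e2 : h⁻¹ * (h * y * h⁻¹) * h = y := by group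
          show h⁻¹ * (h * y * h⁻¹) * h ∈ S
          rw [e2]
          exact hy
      rw [e, hμconj h hh S]
    calc Iint μ (fA ((fun x => h * x) '' A)) = Iint μ (fun g => fA A (T g)) := by
          congr 1
          funext g
          exact hfT g
      _ = Iint μ (fA A) := Iint_comp μ T hTinv (fA A)
  -- assemble the invariant mean on `L`
  apply hL
  obtain ⟨M, hMdef⟩ : ∃ M : Mean G, ∀ A, M.m A = Iint μ (fA A) :=
    ⟨⟨fun A => Iint μ (fA A), fun A => Iint_nonneg μ _, hMtotal, hMadd⟩, fun A => rfl⟩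
  refine ⟨⟨fun A => M.m ((fun y : ↥L => (y : G)) '' A), fun A => M.nonneg _, ?_, ?_⟩, ?_⟩
  · rw [Set.image_univ]
    have e : Set.range (fun y : ↥L => (y : G)) = ↑L := Subtype.range_coe
    rw [e, hMdef]
    exact hML
  · intro A A' hd
    rw [Set.image_union]
    exact M.fin_add _ _ (Set.disjoint_image_of_injective Subtype.coe_injective hd)
  · intro l A
    dsimp only
    have e : ((fun y : ↥L => (y : G)) '' ((fun x => l * x) '' A))
        = (fun x => (l : G) * x) '' ((fun y : ↥L => (y : G)) '' A) := by
      rw [← Set.image_comp, ← Set.image_comp]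
      rfl
    rw [e, hMdef, hMdef]
    exact hMinv (l : G) l.2 _

end MeanAux

/-- Lemma: if `(G,H)` is inner amenable and `m` is an `H`-conjugation invariant mean on
`G`, then for any finite collection `F` of nonamenable subgroups of `H`, `m`-almost every
`g ∈ G` has `L ∩ C_G(g)` nonamenable for all `L ∈ F`. -/
theorem conull_nonamenable_centralizers {G : Type*} [Group G] [Countable G]
    (H : Subgroup G) (hpair : PairInnerAmenable H)
    (m : Mean G) (hm : ∀ h ∈ H, ∀ A : Set G, m.m ((fun x => h * x * h⁻¹) '' A) = m.m A)
    (F : Finset (Subgroup G)) (hF : ∀ L ∈ F, L ≤ H ∧ ¬ AmenableGroup ↥L) :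
    m.m {g : G | ∀ L ∈ F, ¬ AmenableGroup ↥(L ⊓ Subgroup.centralizer {g})} = 1 := by
  classical
  have hBadnull : m.m {g : G | ∃ L ∈ F, AmenableGroup ↥(L ⊓ Subgroup.centralizer {g})} = 0 := by
    have he : {g : G | ∃ L ∈ F, AmenableGroup ↥(L ⊓ Subgroup.centralizer {g})}
        = ⋃ L ∈ F, {g : G | AmenableGroup ↥(L ⊓ Subgroup.centralizer {g})} := by
      ext g; simp [Set.mem_iUnion]
    rw [he]
    exact MeanAux.null_biUnion m F _ fun L hLF =>
      MeanAux.null_of_nonamenable H m hm L (hF L hLF).1 (hF L hLF).2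
  have hc : {g : G | ∀ L ∈ F, ¬ AmenableGroup ↥(L ⊓ Subgroup.centralizer {g})}
      = {g : G | ∃ L ∈ F, AmenableGroup ↥(L ⊓ Subgroup.centralizer {g})}ᶜ := by
    ext g
    simp only [Set.mem_setOf_eq, Set.mem_compl_iff]
    push_neg
    rfl
  rw [hc, MeanAux.mean_compl, hBadnull]
  norm_num
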